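/- Let α be a 1-form and β a nowhere-vanishing 1-form on ℂ^{2k} satisfying (dα)^k = k(dα)^{k-1} ∧ α ∧ β. Define ω = dz + α + zβ on ℂ^{2k+1} (with β independent of z). Then the function H defined by ω ∧ (dω)^k = H dz ∧ dx¹ ∧ ⋯ ∧ dx^{2k} vanishes identically on {z = 0}. -/

import Mathlib

/-- Partial derivative in the `j`-th coordinate direction on `ℂᴺ`.  Coordinate `0`
is `z` and coordinates `1, …, 2k` are `x¹, …, x^{2k}`. -/
noncomputable def pd {N : ℕ} (j : Fin N) (F : (Fin N → ℂ) → ℂ) (p : Fin N → ℂ) : ℂ :=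
  fderiv ℂ F p (Pi.single j 1)

/-- The generator `dx^i` (with `dx^0 = dz`) in the exterior algebra of `ℂᴺ`. -/
noncomputable def gen {N : ℕ} (i : Fin N) : ExteriorAlgebra ℂ (Fin N → ℂ) :=
  ExteriorAlgebra.ι ℂ (Pi.single i 1)

/-- The value at `p` of the 1-form with component functions `w`. -/
noncomputable def oneForm {N : ℕ} (w : (Fin N → ℂ) → Fin N → ℂ) (p : Fin N → ℂ) :
    ExteriorAlgebra ℂ (Fin N → ℂ) :=
  ∑ i, w p i • gen i

/-- The value at `p` of the exterior derivative of the 1-form with components `w`: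
`dω = ∑_{j,i} ∂_j w_i dx^j ∧ dx^i`. -/
noncomputable def dOneForm {N : ℕ} (w : (Fin N → ℂ) → Fin N → ℂ) (p : Fin N → ℂ) :
    ExteriorAlgebra ℂ (Fin N → ℂ) :=
  ∑ j, ∑ i, pd j (fun q => w q i) p • (gen j * gen i)

/-- The volume form `dz ∧ dx¹ ∧ ⋯ ∧ dx^{2k}` in the exterior algebra. -/
noncomputable def vol (N : ℕ) : ExteriorAlgebra ℂ (Fin N → ℂ) :=
  (List.ofFn (fun i : Fin N => gen i)).prod

open ExteriorAlgebra

lemma oneForm_eq {N : ℕ} (w : (Fin N → ℂ) → Fin N → ℂ) (p : Fin N → ℂ) :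
    oneForm w p = ExteriorAlgebra.ι ℂ (w p) := by
  unfold oneForm gen
  simp_rw [← map_smul]
  rw [← map_sum]
  congr 1
  have : ∀ i : Fin N, w p i • (Pi.single i 1 : Fin N → ℂ) = Pi.single i (w p i) := by
    intro i; rw [← Pi.single_smul, smul_eq_mul, mul_one]
  simp_rw [this]
  exact Finset.univ_sum_single (w p)

lemma add_pow_sq_zero {R : Type*} [Ring R] {A B : R} (h : Commute A B) (hB : B * B = 0)
    {k : ℕ} (hk : 1 ≤ k) : (A + B) ^ k = A ^ k + k • (A ^ (k - 1) * B) := by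
  induction k, hk using Nat.le_induction with
  | base => simp
  | succ k hk ih =>
    rw [pow_succ, ih, add_mul, mul_add, mul_add, smul_mul_assoc, smul_mul_assoc,
      mul_assoc, mul_assoc, hB, mul_zero, smul_zero, add_zero,
      ← h.eq, ← mul_assoc, ← pow_succ, ← pow_succ, Nat.sub_add_cancel hk,
      Nat.add_sub_cancel, succ_nsmul]
    abel

lemma vol_ne_zero (N : ℕ) : vol N ≠ 0 := by
  have hvol : vol N = ιMulti ℂ N (fun i : Fin N => Pi.single i 1) := (ιMulti_apply _).symm
  intro h
  set f : ∀ i : ℕ, (Fin N → ℂ) [⋀^Fin i]→ₗ[ℂ] ℂ :=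
    Function.update (fun _ => 0) N ((Pi.basisFun ℂ (Fin N)).det) with hf
  have h2 := congrArg (liftAlternating (R := ℂ) f) h
  rw [hvol, liftAlternating_apply_ιMulti, map_zero] at h2
  rw [hf, Function.update_self] at h2
  have hv : (fun i : Fin N => (Pi.single i 1 : Fin N → ℂ)) = ⇑(Pi.basisFun ℂ (Fin N)) := by
    funext i; simp [Pi.basisFun_apply]
  rw [hv, Module.Basis.det_self] at h2
  exact one_ne_zero h2

lemma swap_ι {M : Type*} [AddCommGroup M] [Module ℂ M] (u v : M) :
    ExteriorAlgebra.ι ℂ u * ExteriorAlgebra.ι ℂ v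
      = -(ExteriorAlgebra.ι ℂ v * ExteriorAlgebra.ι ℂ u) :=
  eq_neg_of_add_eq_zero_left (ι_add_mul_swap u v)

lemma ι_mul_ι_comm' {M : Type*} [AddCommGroup M] [Module ℂ M] (u v w : M) :
    Commute (ExteriorAlgebra.ι ℂ u * ExteriorAlgebra.ι ℂ v) (ExteriorAlgebra.ι ℂ w) := by
  unfold Commute SemiconjBy
  rw [mul_assoc, swap_ι v w, mul_neg, ← mul_assoc, swap_ι u w, neg_mul, neg_neg, mul_assoc]

lemma prod_sq_zero {M : Type*} [AddCommGroup M] [Module ℂ M] (u v : M) :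
    (ExteriorAlgebra.ι ℂ u * ExteriorAlgebra.ι ℂ v)
      * (ExteriorAlgebra.ι ℂ u * ExteriorAlgebra.ι ℂ v) = 0 := by
  rw [mul_assoc, ← mul_assoc (ExteriorAlgebra.ι ℂ v), swap_ι v u, neg_mul, mul_neg,
    neg_eq_zero, ← mul_assoc, ← mul_assoc, ι_sq_zero, zero_mul, zero_mul]

lemma key_alg {R : Type*} [Ring R] [Algebra ℂ R] {k : ℕ} (C E av bv Ak : R)
    (hEC : E * C = C * E) (havC : av * C = C * av) (hEE : E * E = 0)
    (havav : av * av = 0) (havE : av * E = -(E * av))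
    (hAk : Ak = (k : ℂ) • (C * av * bv)) :
    (E + av) * (Ak + (k : ℂ) • (C * (E * bv))) = 0 := by
  subst hAk
  simp only [mul_add, add_mul, mul_smul_comm, ← mul_assoc]
  rw [hEC, havC]
  rw [mul_assoc C E E, hEE, mul_zero, zero_mul, zero_add,
    mul_assoc C av av, havav, mul_zero, zero_mul, add_zero,
    mul_assoc C av E, havE, mul_neg, ← mul_assoc C E av, neg_mul, smul_neg]
  abel

lemma pd_const {N : ℕ} (j : Fin N) (c : ℂ) (p : Fin N → ℂ) : pd j (fun _ => c) p = 0 := by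
  simp [pd]

/-- Let `α = ∑ aᵢ(x)dxⁱ` and `β = ∑ bᵢ(x)dxⁱ` be 1-forms on `ℂ^{2k}` (viewed on
`ℂ^{2k+1}`, independent of `z`), with `β` nowhere vanishing, satisfying the
realizability condition `(dα)^k = k (dα)^{k-1} ∧ α ∧ β`.  Set `ω = dz + α + zβ` and
define `H` by `ω ∧ (dω)^k = H dz∧dx¹∧⋯∧dx^{2k}`.  Then `H` vanishes identically on
`{z = 0}`: the hyperplane `{z = 0}` consists of noncontact points of `ω`. -/
theorem degeneracy_on_zero_section {k : ℕ} (hk : 1 ≤ k)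
    (a b : (Fin (2 * k + 1) → ℂ) → Fin (2 * k) → ℂ)
    (ha : Differentiable ℂ a) (hb : Differentiable ℂ b)
    (haz : ∀ p, a p = a (Function.update p 0 0))
    (hbz : ∀ p, b p = b (Function.update p 0 0))
    (hbnv : ∀ p, ∃ i, b p i ≠ 0)
    (wa wb w : (Fin (2 * k + 1) → ℂ) → Fin (2 * k + 1) → ℂ)
    (hwa : ∀ p, wa p = Fin.cons 0 (fun i : Fin (2 * k) => a p i))
    (hwb : ∀ p, wb p = Fin.cons 0 (fun i : Fin (2 * k) => b p i))
    (hw : ∀ p, w p = Fin.cons 1 (fun i : Fin (2 * k) => a p i + p 0 * b p i))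
    (hreal : ∀ p, (dOneForm wa p) ^ k =
      (k : ℂ) • ((dOneForm wa p) ^ (k - 1) * oneForm wa p * oneForm wb p))
    (H : (Fin (2 * k + 1) → ℂ) → ℂ)
    (hωH : ∀ p, oneForm w p * (dOneForm w p) ^ k = H p • vol (2 * k + 1)) :
    ∀ x : Fin (2 * k) → ℂ, H (Fin.cons 0 x) = 0 := by
  intro x
  set p : Fin (2 * k + 1) → ℂ := Fin.cons 0 x with hpdef
  have hp0 : p 0 = 0 := by rw [hpdef]; simp
  -- Step A: the 1-form ω at p
  have hwp : w p = Pi.single 0 1 + wa p := by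
    rw [hw p, hwa p]
    funext i
    refine Fin.cases ?_ (fun i => ?_) i
    · simp
    · simp [hp0, Pi.single_eq_of_ne (Fin.succ_ne_zero i)]
  have ho : oneForm w p = gen 0 + oneForm wa p := by
    rw [oneForm_eq, hwp, map_add, ← oneForm_eq]; rfl
  -- partial derivative computations
  have hev : Differentiable ℂ (fun q : Fin (2 * k + 1) → ℂ => q 0) :=
    (ContinuousLinearMap.proj (R := ℂ) (φ := fun _ : Fin (2 * k + 1) => ℂ) 0).differentiable
  have hpd0 : ∀ j : Fin (2 * k + 1),
      pd j (fun q : Fin (2 * k + 1) → ℂ => q 0) p = (Pi.single j 1 : Fin (2 * k + 1) → ℂ) 0 := by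
    intro j
    unfold pd
    rw [show (fun q : Fin (2 * k + 1) → ℂ => q 0)
        = ⇑(ContinuousLinearMap.proj (R := ℂ) (φ := fun _ : Fin (2 * k + 1) => ℂ) 0) from rfl,
      ContinuousLinearMap.fderiv]
    simp
  have hpdw : ∀ (j i : Fin (2 * k + 1)),
      pd j (fun q => w q i) p = pd j (fun q => wa q i) p + (Pi.single j 1 : Fin (2 * k + 1) → ℂ) 0 * wb p i := by
    intro j i
    refine Fin.cases ?_ (fun i => ?_) i
    · have h1 : (fun q => w q 0) = fun _ => (1 : ℂ) := by funext q; rw [hw q]; simp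
      have h2 : (fun q => wa q 0) = fun _ => (0 : ℂ) := by funext q; rw [hwa q]; simp
      have h3 : wb p 0 = 0 := by rw [hwb p]; simp
      rw [h1, h2, h3, pd_const, pd_const, mul_zero, add_zero]
    · have h1 : (fun q => w q i.succ) = fun q => a q i + q 0 * b q i := by
        funext q; rw [hw q]; simp
      have h2 : (fun q => wa q i.succ) = fun q => a q i := by funext q; rw [hwa q]; simp
      have h3 : wb p i.succ = b p i := by rw [hwb p]; simp
      rw [h1, h2, h3]
      unfold pd
      have hai : DifferentiableAt ℂ (fun q => a q i) p := differentiable_pi.mp ha i p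
      have hbi : DifferentiableAt ℂ (fun q => b q i) p := differentiable_pi.mp hb i p
      rw [fderiv_fun_add hai ((hev p).fun_mul hbi), ContinuousLinearMap.add_apply]
      congr 1
      rw [fderiv_fun_mul (hev p) hbi]
      simp only [ContinuousLinearMap.add_apply, ContinuousLinearMap.smul_apply, smul_eq_mul]
      rw [hp0, zero_mul, zero_add]
      rw [show (fderiv ℂ (fun q : Fin (2 * k + 1) → ℂ => q 0) p) (Pi.single j 1)
          = pd j (fun q : Fin (2 * k + 1) → ℂ => q 0) p from rfl, hpd0 j]
      ring
  -- Step B: dω at p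
  have hsum2 : ∑ j : Fin (2 * k + 1), ∑ i : Fin (2 * k + 1),
      ((Pi.single j 1 : Fin (2 * k + 1) → ℂ) 0 * wb p i) • (gen j * gen i) = gen 0 * oneForm wb p := by
    rw [Finset.sum_eq_single_of_mem (0 : Fin (2 * k + 1)) (Finset.mem_univ _)
      (fun j _ hj => Finset.sum_eq_zero fun i _ => by
        rw [Pi.single_eq_of_ne (Ne.symm hj), zero_mul, zero_smul])]
    rw [oneForm, Finset.mul_sum]
    exact Finset.sum_congr rfl fun i _ => by rw [Pi.single_eq_same, one_mul, mul_smul_comm]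
  have hdw : dOneForm w p = dOneForm wa p + gen 0 * oneForm wb p := by
    unfold dOneForm
    rw [← hsum2, ← Finset.sum_add_distrib]
    refine Finset.sum_congr rfl fun j _ => ?_
    rw [← Finset.sum_add_distrib]
    refine Finset.sum_congr rfl fun i _ => ?_
    rw [hpdw j i, add_smul]
  -- commutation facts
  have hcomm : ∀ v : Fin (2 * k + 1) → ℂ,
      Commute (dOneForm wa p) (ExteriorAlgebra.ι ℂ v) := by
    intro v
    unfold dOneForm gen
    refine Commute.sum_left _ _ _ fun j _ => Commute.sum_left _ _ _ fun i _ => ?_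
    exact (ι_mul_ι_comm' _ _ _).smul_left _
  have hav : oneForm wa p = ExteriorAlgebra.ι ℂ (wa p) := oneForm_eq _ _
  have hbv : oneForm wb p = ExteriorAlgebra.ι ℂ (wb p) := oneForm_eq _ _
  have hE : gen (0 : Fin (2 * k + 1)) = ExteriorAlgebra.ι ℂ (Pi.single 0 1) := rfl
  have hB2 : (gen 0 * oneForm wb p) * (gen 0 * oneForm wb p) = 0 := by
    rw [hbv, hE]; exact prod_sq_zero _ _
  have hCommB : Commute (dOneForm wa p) (gen 0 * oneForm wb p) := by
    rw [hbv, hE]; exact (hcomm _).mul_right (hcomm _)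
  -- main computation
  have h1 := hωH p
  rw [ho, hdw, add_pow_sq_zero hCommB hB2 hk, ← Nat.cast_smul_eq_nsmul ℂ] at h1
  have hEC : gen (0 : Fin (2 * k + 1)) * (dOneForm wa p) ^ (k - 1)
      = (dOneForm wa p) ^ (k - 1) * gen 0 := by
    rw [hE]; exact (((hcomm _).pow_left (k - 1)).eq).symm
  have havC : oneForm wa p * (dOneForm wa p) ^ (k - 1)
      = (dOneForm wa p) ^ (k - 1) * oneForm wa p := by
    rw [hav]; exact (((hcomm _).pow_left (k - 1)).eq).symm
  have hEE : gen (0 : Fin (2 * k + 1)) * gen 0 = 0 := by rw [hE]; exact ι_sq_zero _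
  have havav : oneForm wa p * oneForm wa p = 0 := by rw [hav]; exact ι_sq_zero _
  have havE : oneForm wa p * gen 0 = -(gen 0 * oneForm wa p) := by
    rw [hav, hE]; exact swap_ι _ _
  rw [key_alg ((dOneForm wa p) ^ (k - 1)) (gen 0) (oneForm wa p) (oneForm wb p)
    ((dOneForm wa p) ^ k) hEC havC hEE havav havE (hreal p)] at h1
  have := (smul_eq_zero.mp h1.symm).resolve_right (vol_ne_zero _)
  exact this
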